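/- Let b_1, b_2 be nontrivial planar loops in PL_0(V) with spans U_1, U_2 respectively. If the concatenation b_1 · b_2 is again a planar loop, then U_1 = U_2. -/

import Mathlib

/-!
STATEMENT 6: If `b₁, b₂` are nontrivial planar loops in `PL₀(V)` with spans `U₁, U₂`
and the concatenation `b₁ · b₂` is again a planar loop, then `U₁ = U₂`.
-/

open FreeMonoid

variable (V : Type*) [AddCommGroup V] [Module ℝ V]

/-- The defining relations of `PL₀(V)`. -/
inductive PLRel : FreeMonoid V → FreeMonoid V → Prop
  | pair (v w : V) (h : ¬ LinearIndependent ℝ ![v, w]) :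
      PLRel (of v * of w) (of (v + w))
  | zero : PLRel (of (0 : V)) 1

/-- The group (as a quotient monoid) `PL₀(V)` of piecewise linear paths. -/
abbrev PL0 := (conGen (PLRel V)).Quotient

variable {V}

/-- The quotient map `FMon(V) → PL₀(V)`. -/
abbrev PLmk : FreeMonoid V →* PL0 V := (conGen (PLRel V)).mk'

/-- A minimal word: all letters nonzero, consecutive letters linearly independent. -/
def IsMinWord (l : List V) : Prop :=
  (∀ v ∈ l, v ≠ 0) ∧ l.Chain' (fun v w => LinearIndependent ℝ ![v, w])



section LinHelpers

/-- Two multiples of the same vector are never linearly independent. -/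
lemma dep_smul_smul (a b : ℝ) (v : V) : ¬ LinearIndependent ℝ ![a • v, b • v] := by
  intro h
  have h1 := LinearIndependent.pair_iff.mp h b (-a)
  have : b • a • v + (-a) • b • v = 0 := by
    rw [smul_comm, neg_smul, add_neg_cancel]
  obtain ⟨hb, ha⟩ := h1 this
  have ha' : a = 0 := by linarith [neg_eq_zero.mp ha]
  have h2 := LinearIndependent.pair_iff.mp h 1 0
  subst hb; subst ha'
  simp at h2

lemma exists_smul_of_dep {v w : V} (hv : v ≠ 0)
    (h : ¬ LinearIndependent ℝ ![v, w]) : ∃ c : ℝ, w = c • v := by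
  by_contra hc
  push_neg at hc
  apply h
  rw [LinearIndependent.pair_iff]
  intro s t hst
  by_cases ht : t = 0
  · subst ht
    simp only [zero_smul, add_zero, smul_eq_zero] at hst
    exact ⟨hst.resolve_right hv, rfl⟩
  · exfalso
    apply hc (-s/t)
    have h2 : t • w = (-s) • v := by
      rw [neg_smul]
      exact (neg_eq_of_add_eq_zero_right hst).symm
    have := congrArg (fun x => (t⁻¹ : ℝ) • x) h2
    simp only [smul_smul, inv_mul_cancel₀ ht, one_smul] at this
    rw [this]
    congr 1
    field_simp

lemma ind_smul_left {v u : V} (h : LinearIndependent ℝ ![v, u]) {c : ℝ} (hc : c ≠ 0) :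
    LinearIndependent ℝ ![c • v, u] := by
  rw [LinearIndependent.pair_iff] at h ⊢
  intro s t hst
  have := h (s * c) t (by rw [mul_smul]; exact hst)
  exact ⟨by rcases mul_eq_zero.mp this.1 with h' | h'; exact h'; exact absurd h' hc, this.2⟩

lemma ind_symm {v u : V} (h : LinearIndependent ℝ ![v, u]) : LinearIndependent ℝ ![u, v] := by
  rw [LinearIndependent.pair_iff] at h ⊢
  intro s t hst
  have := h t s (by rw [add_comm]; exact hst)
  exact ⟨this.2, this.1⟩

lemma ind_smul_right {v u : V} (h : LinearIndependent ℝ ![v, u]) {c : ℝ} (hc : c ≠ 0) :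
    LinearIndependent ℝ ![v, c • u] :=
  ind_symm (ind_smul_left (ind_symm h) hc)

lemma ind_neg_neg {v u : V} (h : LinearIndependent ℝ ![v, u]) :
    LinearIndependent ℝ ![-u, -v] := by
  have := ind_smul_left (ind_smul_right (ind_symm h) (c := -1) (by norm_num)) (c := -1) (by norm_num)
  simpa using this

end LinHelpers
section Pcons

open scoped Classical in
/-- Push a letter onto a minimal word, performing at most one reduction step. -/
noncomputable def pcons (v : V) (l : List V) : List V :=
  if v = 0 then l else
  match l with
  | [] => [v]
  | w :: t => if LinearIndependent ℝ ![v, w] then v :: w :: t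
              else if v + w = 0 then t else (v + w) :: t

@[simp] lemma pcons_zero (l : List V) : pcons (0 : V) l = l := by simp [pcons]

lemma pcons_nil {v : V} (hv : v ≠ 0) : pcons v ([] : List V) = [v] := by simp [pcons, hv]

lemma pcons_ind {v w : V} (hv : v ≠ 0) (h : LinearIndependent ℝ ![v, w]) (t : List V) :
    pcons v (w :: t) = v :: w :: t := by simp [pcons, hv, h]

lemma pcons_dep0 {v w : V} (hv : v ≠ 0) (h : ¬ LinearIndependent ℝ ![v, w])
    (h0 : v + w = 0) (t : List V) : pcons v (w :: t) = t := by simp [pcons, hv, h, h0]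

lemma pcons_dep {v w : V} (hv : v ≠ 0) (h : ¬ LinearIndependent ℝ ![v, w])
    (h0 : v + w ≠ 0) (t : List V) : pcons v (w :: t) = (v + w) :: t := by
  simp [pcons, hv, h, h0]

/-- The normal form map. -/
noncomputable def pnf (l : List V) : List V := l.foldr pcons []

lemma isMinWord_nil : IsMinWord ([] : List V) := ⟨by simp, List.isChain_nil⟩

lemma isMinWord_cons_iff {v : V} {l : List V} :
    IsMinWord (v :: l) ↔ v ≠ 0 ∧ (∀ u ∈ l.head?, LinearIndependent ℝ ![v, u]) ∧ IsMinWord l := by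
  constructor
  · rintro ⟨h1, h2⟩
    replace h2 := List.isChain_cons.mp h2
    exact ⟨h1 v (by simp), h2.1, fun u hu => h1 u (by simp [hu]), h2.2⟩
  · rintro ⟨h1, h2, h3, h4⟩
    refine ⟨?_, List.isChain_cons.mpr ⟨h2, h4⟩⟩
    intro u hu
    rcases List.mem_cons.mp hu with h | h
    · subst h; exact h1
    · exact h3 u h

lemma IsMinWord.tail {v : V} {l : List V} (h : IsMinWord (v :: l)) : IsMinWord l :=
  (isMinWord_cons_iff.mp h).2.2

lemma IsMinWord.head_ne {v : V} {l : List V} (h : IsMinWord (v :: l)) : v ≠ 0 :=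
  (isMinWord_cons_iff.mp h).1

lemma IsMinWord.head_ind {v w : V} {l : List V} (h : IsMinWord (v :: w :: l)) :
    LinearIndependent ℝ ![v, w] :=
  (isMinWord_cons_iff.mp h).2.1 w rfl

lemma isMinWord_pcons {l : List V} (hl : IsMinWord l) (v : V) : IsMinWord (pcons v l) := by
  by_cases hv : v = 0
  · subst hv; simpa using hl
  rcases l with _ | ⟨w, t⟩
  · rw [pcons_nil hv]
    exact isMinWord_cons_iff.mpr ⟨hv, by simp, isMinWord_nil⟩
  by_cases hind : LinearIndependent ℝ ![v, w]
  · rw [pcons_ind hv hind]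
    exact isMinWord_cons_iff.mpr ⟨hv, by simpa using hind, hl⟩
  by_cases h0 : v + w = 0
  · rw [pcons_dep0 hv hind h0]
    exact hl.tail
  · rw [pcons_dep hv hind h0]
    have hw : w ≠ 0 := hl.head_ne
    obtain ⟨c, hc⟩ := exists_smul_of_dep hv hind
    refine isMinWord_cons_iff.mpr ⟨h0, ?_, hl.tail⟩
    intro u hu
    rcases t with _ | ⟨u', t'⟩
    · simp at hu
    · have huu : u' = u := by simpa using hu
      subst huu
      have hwu : LinearIndependent ℝ ![w, u'] := hl.head_ind
      have hc0 : c ≠ 0 := by rintro rfl; simp at hc; exact hw hc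
      have hvw : v + w = (1 + c) • v := by rw [hc, add_smul, one_smul]
      have h1c : (1 + c) ≠ 0 := fun h' => h0 (by rw [hvw, h', zero_smul])
      have hvu : LinearIndependent ℝ ![v, u'] := by
        have := ind_smul_left hwu (c := c⁻¹) (inv_ne_zero hc0)
        rwa [hc, smul_smul, inv_mul_cancel₀ hc0, one_smul] at this
      rw [hvw]
      exact ind_smul_left hvu h1c

lemma isMinWord_foldr {r : List V} (hr : IsMinWord r) (l : List V) :
    IsMinWord (l.foldr pcons r) := by
  induction l with
  | nil => exact hr
  | cons v t ih => exact isMinWord_pcons ih v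

lemma isMinWord_pnf (l : List V) : IsMinWord (pnf l) := isMinWord_foldr isMinWord_nil l

lemma pnf_of_min {l : List V} (hl : IsMinWord l) : pnf l = l := by
  induction l with
  | nil => rfl
  | cons v t ih =>
    have ht := hl.tail
    rw [pnf, List.foldr_cons, ← pnf, ih ht]
    rcases t with _ | ⟨w, t'⟩
    · exact pcons_nil hl.head_ne
    · exact pcons_ind hl.head_ne hl.head_ind _

end Pcons
section Comb

lemma dep_of_eq_smul {v x y : V} {a b : ℝ} (hx : x = a • v) (hy : y = b • v) :
    ¬ LinearIndependent ℝ ![x, y] := by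
  rw [hx, hy]; exact dep_smul_smul a b v

lemma ind_of_smul_eq {x y u : V} {a : ℝ} (ha : a ≠ 0) (hxy : x = a • y)
    (h : LinearIndependent ℝ ![x, u]) : LinearIndependent ℝ ![y, u] := by
  have := ind_smul_left h (inv_ne_zero ha)
  rwa [hxy, smul_smul, inv_mul_cancel₀ ha, one_smul] at this

lemma pcons_of_min_cons {u : V} {s : List V} (h : IsMinWord (u :: s)) :
    pcons u s = u :: s := by
  rcases s with _ | ⟨h', s'⟩
  · exact pcons_nil h.head_ne
  · exact pcons_ind h.head_ne h.head_ind _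

/-- Key combination lemma: pushing two dependent letters equals pushing their sum. -/
lemma pcons_pcons {v w : V} (hv : v ≠ 0) (hw : w ≠ 0)
    (hdep : ¬ LinearIndependent ℝ ![v, w]) {X : List V} (hX : IsMinWord X) :
    pcons v (pcons w X) = pcons (v + w) X := by
  obtain ⟨c, hc⟩ := exists_smul_of_dep hv hdep
  have hc0 : c ≠ 0 := by rintro rfl; simp at hc; exact hw hc
  have hv1 : v = (1 : ℝ) • v := (one_smul ℝ v).symm
  have hvw_smul : v + w = (1 + c) • v := by rw [hc, add_smul, one_smul]
  rcases X with _ | ⟨u, s⟩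
  · rw [pcons_nil hw]
    by_cases h0 : v + w = 0
    · rw [pcons_dep0 hv hdep h0, h0, pcons_zero]
    · rw [pcons_dep hv hdep h0, pcons_nil h0]
  have hu : u ≠ 0 := hX.head_ne
  by_cases hwu : LinearIndependent ℝ ![w, u]
  · -- no interaction between w and u
    rw [pcons_ind hw hwu]
    by_cases h0 : v + w = 0
    · rw [pcons_dep0 hv hdep h0, h0, pcons_zero]
    · rw [pcons_dep hv hdep h0]
      have hvwu : LinearIndependent ℝ ![v + w, u] := by
        have h1c : (1 + c) ≠ 0 := fun h' => h0 (by rw [hvw_smul, h', zero_smul])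
        have hvu : LinearIndependent ℝ ![v, u] := ind_of_smul_eq hc0 hc hwu
        rw [hvw_smul]; exact ind_smul_left hvu h1c
      rw [pcons_ind h0 hvwu]
  · -- w and u dependent
    obtain ⟨e, he⟩ := exists_smul_of_dep hw hwu
    have he0 : e ≠ 0 := by rintro rfl; simp at he; exact hu he
    have hu_v : u = (e * c) • v := by rw [he, hc, smul_smul]
    have hec0 : e * c ≠ 0 := mul_ne_zero he0 hc0
    by_cases h1 : w + u = 0
    · -- w and u cancel
      rw [pcons_dep0 hw hwu h1]
      have huw : u = -w := by
        have := h1; rw [add_comm] at this; exact eq_neg_of_add_eq_zero_left this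
      by_cases hvw0 : v + w = 0
      · have hvu : v = u := by
          rw [huw, ← eq_neg_of_add_eq_zero_left hvw0]
        rw [hvw0, pcons_zero, hvu, pcons_of_min_cons hX]
      · have hdvu : ¬ LinearIndependent ℝ ![v + w, u] := dep_of_eq_smul hvw_smul hu_v
        have hsum : v + w + u = v := by rw [add_assoc, h1, add_zero]
        have hsum0 : v + w + u ≠ 0 := by rw [hsum]; exact hv
        rw [pcons_dep hvw0 hdvu hsum0, hsum]
        rcases s with _ | ⟨h', s'⟩
        · exact pcons_nil hv
        · have hvh' : LinearIndependent ℝ ![v, h'] := ind_of_smul_eq hec0 hu_v hX.head_ind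
          exact pcons_ind hv hvh' _
    · -- w absorbs u
      have hwu_v : w + u = (c + e * c) • v := by rw [hc, hu_v, ← add_smul]
      rw [pcons_dep hw hwu h1]
      have hdvwu : ¬ LinearIndependent ℝ ![v, w + u] := dep_of_eq_smul hv1 hwu_v
      by_cases hvw0 : v + w = 0
      · have hsum : v + (w + u) = u := by rw [← add_assoc, hvw0, zero_add]
        have hsum0 : v + (w + u) ≠ 0 := by rw [hsum]; exact hu
        rw [pcons_dep hv hdvwu hsum0, hsum, hvw0, pcons_zero]
      · have hdvwu' : ¬ LinearIndependent ℝ ![v + w, u] := dep_of_eq_smul hvw_smul hu_v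
        by_cases h2 : v + (w + u) = 0
        · rw [pcons_dep0 hv hdvwu h2, pcons_dep0 hvw0 hdvwu' (by rw [add_assoc]; exact h2)]
        · rw [pcons_dep hv hdvwu h2, pcons_dep hvw0 hdvwu' (by rw [add_assoc]; exact h2),
            add_assoc]

end Comb

section NF

lemma pcons_foldr {X : List V} (hX : IsMinWord X) {r : List V} (hr : IsMinWord r) (v : V) :
    pcons v (List.foldr pcons r X) = List.foldr pcons r (pcons v X) := by
  by_cases hv : v = 0
  · subst hv; simp
  rcases X with _ | ⟨w, t⟩
  · simp [pcons_nil hv]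
  have hw : w ≠ 0 := hX.head_ne
  by_cases hind : LinearIndependent ℝ ![v, w]
  · rw [pcons_ind hv hind]; rfl
  · have hY : IsMinWord (List.foldr pcons r t) := isMinWord_foldr hr t
    have key : pcons v (pcons w (List.foldr pcons r t)) =
        pcons (v + w) (List.foldr pcons r t) := pcons_pcons hv hw hind hY
    by_cases h0 : v + w = 0
    · rw [pcons_dep0 hv hind h0, List.foldr_cons, key, h0, pcons_zero]
    · rw [pcons_dep hv hind h0, List.foldr_cons, key, List.foldr_cons]

lemma foldr_pnf (l : List V) {r : List V} (hr : IsMinWord r) :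
    List.foldr pcons r l = List.foldr pcons r (pnf l) := by
  induction l with
  | nil => rfl
  | cons v t ih =>
    show pcons v (List.foldr pcons r t) = List.foldr pcons r (pnf (v :: t))
    have hp : pnf (v :: t) = pcons v (pnf t) := rfl
    rw [ih, hp, ← pcons_foldr (isMinWord_pnf t) hr v]

end NF
section Congr

lemma pnf_append (a b : List V) : pnf (a ++ b) = List.foldr pcons (pnf b) a := by
  rw [pnf, List.foldr_append]; rfl

variable (V) in
/-- The congruence "same normal form". -/
noncomputable def pnfCon : Con (FreeMonoid V) where
  r a b := pnf a.toList = pnf b.toList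
  iseqv := ⟨fun _ => rfl, Eq.symm, Eq.trans⟩
  mul' {w x y z} h1 h2 := by
    show pnf (w * y).toList = pnf (x * z).toList
    rw [toList_mul, toList_mul, pnf_append, pnf_append,
      foldr_pnf _ (isMinWord_pnf _), foldr_pnf x.toList (isMinWord_pnf _), h1, h2]

lemma plrel_le_pnfCon : ∀ x y, PLRel V x y → (pnfCon V) x y := by
  intro x y h
  cases h with
  | pair v w hdep =>
    show pnf (of v * of w).toList = pnf (of (v + w)).toList
    rw [toList_mul, toList_of, toList_of]
    show pnf [v, w] = pnf [v + w]
    have h1 : pnf [v, w] = pcons v (pcons w []) := rfl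
    have h2 : pnf [v + w] = pcons (v + w) [] := rfl
    rw [h1, h2]
    by_cases hw : w = 0
    · subst hw; rw [pcons_zero, add_zero]
    by_cases hv : v = 0
    · subst hv; rw [pcons_zero, zero_add]
    · exact pcons_pcons hv hw hdep isMinWord_nil
  | zero =>
    show pnf (of (0 : V)).toList = pnf (1 : FreeMonoid V).toList
    rw [toList_of, toList_one]
    show pcons (0 : V) [] = pnf []
    rw [pcons_zero]; rfl

lemma pnf_eq_of_PLmk_eq {x y : List V}
    (h : PLmk (ofList x) = PLmk (ofList y)) : pnf x = pnf y := by
  have h1 : conGen (PLRel V) (ofList x) (ofList y) := (Con.eq _).mp h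
  have h2 := Con.conGen_le.mpr plrel_le_pnfCon h1
  have h3 : pnf (ofList x).toList = pnf (ofList y).toList := h2
  rwa [toList_ofList, toList_ofList] at h3

/-- The "reverse and negate" operation on words; the formal inverse. -/
def negRev (l : List V) : List V := (l.map (fun v => -v)).reverse

lemma negRev_append (a b : List V) : negRev (a ++ b) = negRev b ++ negRev a := by
  simp [negRev]

lemma isMinWord_negRev {l : List V} (h : IsMinWord l) : IsMinWord (negRev l) := by
  obtain ⟨h1, h2⟩ := h
  constructor
  · intro v hv
    rw [negRev, List.mem_reverse, List.mem_map] at hv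
    obtain ⟨y, hy, rfl⟩ := hv
    simpa using h1 y hy
  · rw [negRev]; show List.IsChain _ _; rw [List.isChain_reverse, List.isChain_map]
    exact h2.imp fun {a b} hab => ind_neg_neg hab

lemma span_negRev (l : List V) :
    Submodule.span ℝ {x | x ∈ negRev l} = Submodule.span ℝ {x | x ∈ l} := by
  apply le_antisymm <;> rw [Submodule.span_le] <;> intro x hx
  · simp only [Set.mem_setOf_eq, negRev, List.mem_reverse, List.mem_map] at hx
    obtain ⟨y, hy, rfl⟩ := hx
    exact neg_mem (Submodule.subset_span hy)
  · simp only [Set.mem_setOf_eq] at hx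
    have hmem : -x ∈ {z | z ∈ negRev l} := by
      simp only [Set.mem_setOf_eq, negRev, List.mem_reverse, List.mem_map]
      exact ⟨x, hx, rfl⟩
    have h2 : -x ∈ Submodule.span ℝ {z | z ∈ negRev l} := Submodule.subset_span hmem
    simpa using neg_mem h2

variable (V) in
/-- The congruence "inverses are congruent". -/
noncomputable def negRevCon : Con (FreeMonoid V) where
  r a b := conGen (PLRel V) (ofList (negRev a.toList)) (ofList (negRev b.toList))
  iseqv := ⟨fun _ => (conGen (PLRel V)).refl _, (conGen (PLRel V)).symm,
      (conGen (PLRel V)).trans⟩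
  mul' {w x y z} h1 h2 := by
    show conGen (PLRel V) (ofList (negRev (w * y).toList)) (ofList (negRev (x * z).toList))
    rw [toList_mul, toList_mul, negRev_append, negRev_append, ofList_append, ofList_append]
    exact (conGen (PLRel V)).mul h2 h1

lemma plrel_le_negRevCon : ∀ x y, PLRel V x y → (negRevCon V) x y := by
  intro x y h
  cases h with
  | pair v w hdep =>
    show conGen (PLRel V) (ofList (negRev (of v * of w).toList))
      (ofList (negRev (of (v + w)).toList))
    rw [toList_mul, toList_of, toList_of, toList_of]
    have e1 : negRev ([v] ++ [w]) = [-w, -v] := rfl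
    have e2 : negRev [v + w] = [-(v + w)] := rfl
    rw [e1, e2]
    have hdep' : ¬ LinearIndependent ℝ ![-w, -v] := by
      intro hind
      have := ind_neg_neg hind
      simp only [neg_neg] at this
      exact hdep this
    have := ConGen.Rel.of _ _ (PLRel.pair (-w) (-v) hdep')
    have e3 : (-w) + (-v) = -(v + w) := by abel
    rw [e3] at this
    rw [show ofList [-w, -v] = of (-w) * of (-v) from rfl,
      show ofList [-(v+w)] = of (-(v+w)) from ofList_singleton _]
    exact this
  | zero =>
    show conGen (PLRel V) (ofList (negRev (of (0:V)).toList))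
      (ofList (negRev (1 : FreeMonoid V).toList))
    rw [toList_of, toList_one]
    have e1 : negRev [(0:V)] = [(0:V)] := by simp [negRev]
    have e2 : negRev ([] : List V) = [] := rfl
    rw [e1, e2, ofList_singleton]
    exact ConGen.Rel.of _ _ PLRel.zero

lemma pnf_negRev_eq_of_PLmk_eq {x y : List V}
    (h : PLmk (ofList x) = PLmk (ofList y)) : pnf (negRev x) = pnf (negRev y) := by
  have h1 : conGen (PLRel V) (ofList x) (ofList y) := (Con.eq _).mp h
  have h2 := Con.conGen_le.mpr plrel_le_negRevCon h1
  have h3 : conGen (PLRel V) (ofList (negRev (ofList x).toList))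
      (ofList (negRev (ofList y).toList)) := h2
  rw [toList_ofList, toList_ofList] at h3
  exact pnf_eq_of_PLmk_eq ((Con.eq _).mpr h3)

end Congr
section Zip

lemma IsMinWord.drop {l : List V} (h : IsMinWord l) (j : ℕ) : IsMinWord (l.drop j) :=
  ⟨fun v hv => h.1 v (List.mem_of_mem_drop hv), h.2.drop j⟩

/-- The zipper structure lemma: folding a minimal word onto another minimal word
keeps a prefix intact, and all consumed letters lie in the span of `r`. -/
lemma zip (r : List V) (hr : IsMinWord r) (a : List V) (ha : IsMinWord a) :
    ∃ k t, k ≤ a.length ∧ List.foldr pcons r a = a.take k ++ t ∧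
      (∀ v ∈ a.drop k, v ∈ Submodule.span ℝ {x | x ∈ r}) ∧
      (k = 0 → (∃ j, t = r.drop j) ∨
        ∃ j z h, ∃ c : ℝ, a.head? = some h ∧ z = c • h ∧ z ≠ 0 ∧ t = z :: r.drop j) := by
  induction a with
  | nil =>
    exact ⟨0, r, le_rfl, rfl, by simp, fun _ => Or.inl ⟨0, rfl⟩⟩
  | cons v a' ih =>
    obtain ⟨k', t', hk'len, hEq, hDrop, hStruct⟩ := ih ha.tail
    have hv : v ≠ 0 := ha.head_ne
    have hfold : List.foldr pcons r (v :: a') = pcons v (List.foldr pcons r a') := rfl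
    rcases Nat.eq_zero_or_pos k' with hk0 | hkpos
    · -- no surviving prefix of a' : use structure
      subst hk0
      simp only [List.take_zero, List.nil_append] at hEq
      simp only [List.drop_zero] at hDrop
      rcases hStruct rfl with ⟨j, rfl⟩ | ⟨j, z, h, c, hhead, hzc, hz0, rfl⟩
      · -- t' is a genuine suffix of r
        rcases hdj : r.drop j with _ | ⟨w, s⟩
        · -- suffix empty: v survives
          refine ⟨1, [], by simp, ?_, ?_, by simp⟩
          · rw [hfold, hEq, hdj, pcons_nil hv]; rfl
          · intro x hx; exact hDrop x hx
        · have hwr : w ∈ r := List.mem_of_mem_drop (by rw [hdj]; exact List.mem_cons_self)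
          have hminsfx : IsMinWord (r.drop j) := hr.drop j
          rw [hdj] at hminsfx
          have hw : w ≠ 0 := hminsfx.head_ne
          have hs : s = r.drop (j + 1) := by
            have : (r.drop j).drop 1 = r.drop (j + 1) := by rw [List.drop_drop]
            rw [hdj] at this; simpa using this
          by_cases hind : LinearIndependent ℝ ![v, w]
          · -- v survives
            refine ⟨1, r.drop j, by simp, ?_, ?_, by simp⟩
            · rw [hfold, hEq, hdj, pcons_ind hv hind, List.take_one, ← hdj]; rfl
            · intro x hx; exact hDrop x hx
          · obtain ⟨c, hc⟩ := exists_smul_of_dep hv hind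
            have hc0 : c ≠ 0 := by rintro rfl; simp at hc; exact hw hc
            have hvspan : v ∈ Submodule.span ℝ {x | x ∈ r} := by
              have hwspan : w ∈ Submodule.span ℝ {x | x ∈ r} := Submodule.subset_span hwr
              have : v = c⁻¹ • w := by rw [hc, smul_smul, inv_mul_cancel₀ hc0, one_smul]
              rw [this]; exact Submodule.smul_mem _ _ hwspan
            have hDropAll : ∀ x ∈ v :: a', x ∈ Submodule.span ℝ {x | x ∈ r} := by
              intro x hx
              rcases List.mem_cons.mp hx with rfl | hx'
              · exact hvspan
              · exact hDrop x hx'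
            by_cases h0 : v + w = 0
            · -- exact cancellation
              refine ⟨0, s, Nat.zero_le _, ?_, ?_, fun _ => Or.inl ⟨j + 1, hs⟩⟩
              · rw [hfold, hEq, hdj, pcons_dep0 hv hind h0]; rfl
              · simpa using hDropAll
            · -- merge, survivor z
              refine ⟨0, (v + w) :: s, Nat.zero_le _, ?_, ?_, fun _ => Or.inr ?_⟩
              · rw [hfold, hEq, hdj, pcons_dep hv hind h0]; rfl
              · simpa using hDropAll
              · exact ⟨j + 1, v + w, v, 1 + c, rfl,
                  by rw [hc, add_smul, one_smul], h0, by rw [hs]⟩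
      · -- t' = z :: r.drop j with z a multiple of a'.head
        rcases a' with _ | ⟨v', a''⟩
        · simp at hhead
        · have hv' : v' = h := by simpa using hhead
          subst hv'
          have hc0 : c ≠ 0 := by rintro rfl; simp at hzc; exact hz0 hzc
          have hindvh : LinearIndependent ℝ ![v, v'] := ha.head_ind
          have hindvz : LinearIndependent ℝ ![v, z] := by
            rw [hzc]; exact ind_smul_right hindvh hc0
          refine ⟨1, z :: r.drop j, by simp, ?_, ?_, by simp⟩
          · rw [hfold, hEq, pcons_ind hv hindvz]; rfl
          · intro x hx; exact hDrop x hx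
    · -- the head of a' survives: just prepend v
      obtain ⟨k'', rfl⟩ : ∃ k'', k' = k'' + 1 := ⟨k' - 1, by omega⟩
      rcases a' with _ | ⟨v', a''⟩
      · simp at hk'len
      · have hindvv' : LinearIndependent ℝ ![v, v'] := ha.head_ind
        rw [List.take_succ_cons] at hEq
        refine ⟨k'' + 2, t', by simpa using hk'len, ?_, ?_, by simp⟩
        · rw [hfold, hEq, List.cons_append, pcons_ind hv hindvv', List.take_succ_cons,
            List.take_succ_cons]
          simp
        · intro x hx
          exact hDrop x (by simpa using hx)
end Zip
section Final

lemma range_pair (x y : V) : Set.range ![x, y] = {x, y} := by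
  ext z; simp [Fin.exists_fin_two]; tauto

lemma span_le_of_pair_mem [FiniteDimensional ℝ V] {a : List V}
    (ha2 : Module.finrank ℝ (Submodule.span ℝ {v | v ∈ a}) = 2) {x y : V}
    (hx : x ∈ a) (hy : y ∈ a) (hind : LinearIndependent ℝ ![x, y])
    {Q : Submodule ℝ V} (hxQ : x ∈ Q) (hyQ : y ∈ Q) :
    Submodule.span ℝ {v | v ∈ a} ≤ Q := by
  have hcard : Module.finrank ℝ (Submodule.span ℝ ({x, y} : Set V)) = 2 := by
    have := finrank_span_eq_card hind
    rw [range_pair] at this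
    simpa using this
  have hle : Submodule.span ℝ ({x, y} : Set V) ≤ Submodule.span ℝ {v | v ∈ a} := by
    apply Submodule.span_mono
    intro z hz
    rcases hz with rfl | hz
    · exact hx
    · simp only [Set.mem_singleton_iff] at hz; subst hz; exact hy
  have heq : Submodule.span ℝ ({x, y} : Set V) = Submodule.span ℝ {v | v ∈ a} :=
    Submodule.eq_of_le_of_finrank_le hle (by rw [ha2, hcard])
  rw [← heq]
  rw [Submodule.span_le]
  intro z hz
  rcases hz with rfl | hz
  · exact hxQ
  · simp only [Set.mem_singleton_iff] at hz; subst hz; exact hyQ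

lemma chain'_ind_of_min {a : List V} (ha : IsMinWord a) {i : ℕ} (h : i + 1 < a.length) :
    LinearIndependent ℝ ![a[i], a[i + 1]] := by
  have := List.isChain_iff_getElem.mp ha.2 i (by omega)
  simpa [List.get_eq_getElem] using this

/-- Dichotomy: either the span of `a` survives into the folded word,
or `a` is absorbed into the span of `r`. -/
lemma dichot [FiniteDimensional ℝ V] {a r : List V} (ha : IsMinWord a) (hr : IsMinWord r)
    (ha3 : 3 ≤ a.length)
    (ha2 : Module.finrank ℝ (Submodule.span ℝ {v | v ∈ a}) = 2) :
    Submodule.span ℝ {v | v ∈ a} ≤ Submodule.span ℝ {v | v ∈ List.foldr pcons r a} ∨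
    Submodule.span ℝ {v | v ∈ a} ≤ Submodule.span ℝ {v | v ∈ r} := by
  obtain ⟨k, t, hklen, hEq, hDrop, -⟩ := zip r hr a ha
  by_cases hk : 2 ≤ k
  · left
    have h0 : 0 < a.length := by omega
    have h1 : 1 < a.length := by omega
    have hmem : ∀ i (hi : i < a.length), i < k → a[i] ∈ List.foldr pcons r a := by
      intro i hi hik
      rw [hEq]
      apply List.mem_append_left
      have hi' : i < (a.take k).length := by simp; omega
      have : (a.take k)[i] = a[i] := List.getElem_take
      rw [← this]
      exact List.getElem_mem hi'
    exact span_le_of_pair_mem ha2 (List.getElem_mem h0) (List.getElem_mem h1)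
      (chain'_ind_of_min ha (by omega))
      (Submodule.subset_span (hmem 0 h0 (by omega)))
      (Submodule.subset_span (hmem 1 h1 (by omega)))
  · right
    have hklt : k + 1 < a.length := by omega
    have hmemdrop : ∀ i (hi : i < a.length), k ≤ i → a[i] ∈ a.drop k := by
      intro i hi hik
      have hi' : i - k < (a.drop k).length := by simp; omega
      have : (a.drop k)[i - k] = a[k + (i - k)] := List.getElem_drop
      have h2 : a[i] = (a.drop k)[i - k] := by
        rw [this]; congr 1; omega
      rw [h2]
      exact List.getElem_mem hi'
    exact span_le_of_pair_mem ha2 (List.getElem_mem (by omega)) (List.getElem_mem hklt)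
      (chain'_ind_of_min ha hklt)
      (hDrop _ (hmemdrop k (by omega) le_rfl))
      (hDrop _ (hmemdrop (k + 1) hklt (by omega)))

lemma three_le_length {l : List V} (hmin : IsMinWord l) (hsum : l.sum = 0)
    (h2 : Module.finrank ℝ (Submodule.span ℝ {v | v ∈ l}) = 2) : 3 ≤ l.length := by
  rcases l with _ | ⟨v, _ | ⟨w, _ | ⟨u, t⟩⟩⟩
  · exfalso
    have : ({v | v ∈ ([] : List V)} : Set V) = ∅ := by simp
    rw [this, Submodule.span_empty] at h2
    simp at h2
  · exfalso
    apply hmin.head_ne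
    simpa using hsum
  · exfalso
    have hw : w = -v := by
      have : v + w = 0 := by simpa using hsum
      exact (neg_eq_of_add_eq_zero_right this).symm
    have hind := hmin.head_ind
    rw [hw] at hind
    exact dep_of_eq_smul (a := (1:ℝ)) (b := (-1:ℝ)) (one_smul ℝ v).symm
      (by rw [neg_smul, one_smul]) hind
  · simp

end Final

theorem spans_eq_of_product_of_planar_loops_planar [FiniteDimensional ℝ V]
    (lb₁ lb₂ : List V)
    (h₁min : IsMinWord lb₁) (h₁sum : lb₁.sum = 0)
    (h₁2 : Module.finrank ℝ (Submodule.span ℝ {v | v ∈ lb₁}) = 2)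
    (h₂min : IsMinWord lb₂) (h₂sum : lb₂.sum = 0)
    (h₂2 : Module.finrank ℝ (Submodule.span ℝ {v | v ∈ lb₂}) = 2)
    -- `b₁ · b₂` is a planar loop:
    (hprod : ∃ m : List V, IsMinWord m ∧ m.sum = 0 ∧
        Module.finrank ℝ (Submodule.span ℝ {v | v ∈ m}) ≤ 2 ∧
        PLmk (FreeMonoid.ofList m) = PLmk (FreeMonoid.ofList (lb₁ ++ lb₂))) :
    Submodule.span ℝ {v | v ∈ lb₁} = Submodule.span ℝ {v | v ∈ lb₂} := by
  obtain ⟨m, hmmin, hmsum, hmrk, heq⟩ := hprod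
  have hm1 : m = List.foldr pcons lb₂ lb₁ := by
    have h := pnf_eq_of_PLmk_eq heq
    rw [pnf_of_min hmmin] at h
    rw [h, pnf_append, pnf_of_min h₂min]
  have hmneg : negRev m = List.foldr pcons (negRev lb₁) (negRev lb₂) := by
    have h := pnf_negRev_eq_of_PLmk_eq heq
    rw [pnf_of_min (isMinWord_negRev hmmin)] at h
    rw [h, negRev_append, pnf_append, pnf_of_min (isMinWord_negRev h₁min)]
  have h₁3 := three_le_length h₁min h₁sum h₁2
  have h₂3 := three_le_length h₂min h₂sum h₂2
  have d1 := dichot h₁min h₂min h₁3 h₁2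
  have d2 := dichot (isMinWord_negRev h₂min) (isMinWord_negRev h₁min)
      (by simpa [negRev] using h₂3) (by rw [span_negRev]; exact h₂2)
  rw [← hm1] at d1
  rw [← hmneg, span_negRev, span_negRev, span_negRev] at d2
  rcases d1 with d1 | d1
  · rcases d2 with d2 | d2
    · have e1 : Submodule.span ℝ {v | v ∈ lb₁} = Submodule.span ℝ {v | v ∈ m} :=
        Submodule.eq_of_le_of_finrank_le d1 (by rw [h₁2]; exact hmrk)
      have e2 : Submodule.span ℝ {v | v ∈ lb₂} = Submodule.span ℝ {v | v ∈ m} :=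
        Submodule.eq_of_le_of_finrank_le d2 (by rw [h₂2]; exact hmrk)
      rw [e1, e2]
    · exact (Submodule.eq_of_le_of_finrank_le d2 (by rw [h₁2, h₂2])).symm
  · exact Submodule.eq_of_le_of_finrank_le d1 (by rw [h₁2, h₂2])
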